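/- Let L be an algebraically closed field of characteristic p > 0, n ≥ 1, and let U = (a_{i,j}) be an invertible n×n matrix over L. Then for every b = (b₁,…,b_n) ∈ Lⁿ, the system of equations ∑_{j=1}^n a_{i,j}·x_j^p − x_i = b_i (for 1 ≤ i ≤ n) has a solution (x₁,…,x_n) ∈ Lⁿ. -/

import Mathlib

open MvPolynomial Finsupp

namespace ASaux

variable {L : Type*} [Field L]

lemma deg_add {n : ℕ} (a b : Fin n →₀ ℕ) : (a + b).degree = a.degree + b.degree := by
  rw [degree_eq_weight_one, map_add]

lemma deg_single {n : ℕ} (j : Fin n) (p : ℕ) : (Finsupp.single j p).degree = p := by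
  rcases eq_or_ne p 0 with h | h
  · simp [h]
  · rw [Finsupp.degree_apply, Finsupp.support_single_ne_zero _ h, Finset.sum_singleton,
      Finsupp.single_eq_same]

variable (p : ℕ) {n : ℕ}

noncomputable def pe (j : Fin n) : Fin n →₀ ℕ := Finsupp.single j p

noncomputable def SS (μ : Fin n →₀ ℕ) : Finset (Fin n) :=
  Finset.univ.filter (fun i => pe p i ≤ μ)

lemma mem_SS {μ : Fin n →₀ ℕ} {i : Fin n} : i ∈ SS p μ ↔ pe p i ≤ μ := by
  unfold SS; simp

variable (f : Fin n → MvPolynomial (Fin n) L)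

noncomputable def vv (j : Fin n) (μ : Fin n →₀ ℕ) : L :=
  if pe p j ≤ μ then MvPolynomial.coeff (μ - pe p j) (f j) else 0

noncomputable def ww (j k : Fin n) (μ : Fin n →₀ ℕ) : L :=
  if hS : (SS p μ).Nonempty then
    if j = k then 0
    else if k = (SS p μ).min' hS ∧ pe p j ≤ μ then vv p f j μ
    else if j = (SS p μ).min' hS ∧ pe p k ≤ μ then - vv p f k μ
    else 0
  else 0

lemma ww_diag (j : Fin n) (μ : Fin n →₀ ℕ) : ww p f j j μ = 0 := by
  unfold ww
  split_ifs with h1 h2 <;> simp_all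

lemma ww_antisym (j k : Fin n) (μ : Fin n →₀ ℕ) : ww p f j k μ = - ww p f k j μ := by
  unfold ww
  by_cases hS : (SS p μ).Nonempty
  · rw [dif_pos hS, dif_pos hS]
    rcases eq_or_ne j k with rfl | hjk
    · simp
    rw [if_neg hjk, if_neg (Ne.symm hjk)]
    by_cases h2 : k = (SS p μ).min' hS ∧ pe p j ≤ μ
    · have h2' : ¬ (j = (SS p μ).min' hS ∧ pe p k ≤ μ) := by
        rintro ⟨rfl, -⟩; exact hjk (h2.1.symm)
      rw [if_pos h2, if_neg h2', if_pos ⟨h2.1, h2.2⟩, neg_neg]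
    · rw [if_neg h2]
      by_cases h3 : j = (SS p μ).min' hS ∧ pe p k ≤ μ
      · rw [if_pos h3, if_pos h3]
      · rw [if_neg h3, if_neg h3, if_neg h2, neg_zero]
  · rw [dif_neg hS, dif_neg hS, neg_zero]

lemma vv_eq_zero_of_not_le {j : Fin n} {μ : Fin n →₀ ℕ} (h : ¬ pe p j ≤ μ) :
    vv p f j μ = 0 := if_neg h

lemma ww_support {j k : Fin n} {μ : Fin n →₀ ℕ} (h : ww p f j k μ ≠ 0) :
    pe p j ≤ μ ∧ pe p k ≤ μ ∧ j ≠ k := by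
  unfold ww at h
  by_cases hS : (SS p μ).Nonempty
  · rw [dif_pos hS] at h
    have hj₀ : pe p ((SS p μ).min' hS) ≤ μ := (mem_SS p).mp (Finset.min'_mem _ _)
    split_ifs at h with h1 h2 h3
    · exact absurd rfl h
    · exact ⟨h2.2, h2.1 ▸ hj₀, h1⟩
    · exact ⟨h3.1 ▸ hj₀, h3.2, h1⟩
    · exact absurd rfl h
  · rw [dif_neg hS] at h; exact absurd rfl h

lemma vv_sum (hf : ∑ j, f j * X j ^ p = 0) (μ : Fin n →₀ ℕ) :
    ∑ k, vv p f k μ = 0 := by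
  have h := congrArg (MvPolynomial.coeff μ) hf
  rw [MvPolynomial.coeff_zero, MvPolynomial.coeff_sum] at h
  rw [← h]
  refine Finset.sum_congr rfl fun k _ => ?_
  rw [X_pow_eq_monomial, MvPolynomial.coeff_mul_monomial']
  unfold vv pe
  split_ifs <;> simp

lemma ww_row_sum (hf : ∑ j, f j * X j ^ p = 0) (j : Fin n) (μ : Fin n →₀ ℕ) :
    ∑ k, ww p f j k μ = vv p f j μ := by
  by_cases hS : (SS p μ).Nonempty
  · by_cases hj : pe p j ≤ μ
    · rcases eq_or_ne j ((SS p μ).min' hS) with hjj₀ | hjj₀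
      · -- j is the minimum
        have key : ∀ k, ww p f j k μ = (if k = j then vv p f j μ else 0) - vv p f k μ := by
          intro k
          rcases eq_or_ne k j with rfl | hkj
          · rw [ww_diag, if_pos rfl, sub_self]
          · rw [if_neg hkj, zero_sub]
            unfold ww
            rw [dif_pos hS, if_neg (Ne.symm hkj),
              if_neg (by rintro ⟨rfl, -⟩; exact hkj (hjj₀ ▸ rfl))]
            by_cases hk : pe p k ≤ μ
            · rw [if_pos ⟨hjj₀, hk⟩]
            · rw [if_neg (by tauto), vv_eq_zero_of_not_le p f hk, neg_zero]
        rw [Finset.sum_congr rfl fun k _ => key k, Finset.sum_sub_distrib,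
          vv_sum p f hf, sub_zero]
        simp
      · -- j not the minimum
        rw [Finset.sum_eq_single ((SS p μ).min' hS)]
        · unfold ww
          rw [dif_pos hS, if_neg hjj₀, if_pos ⟨rfl, hj⟩]
        · intro k _ hk
          rcases eq_or_ne j k with rfl | hjk
          · exact ww_diag p f j μ
          unfold ww
          rw [dif_pos hS, if_neg hjk, if_neg (by tauto), if_neg (by tauto)]
        · intro h; exact absurd (Finset.mem_univ _) h
    · rw [vv_eq_zero_of_not_le p f hj]
      refine Finset.sum_eq_zero fun k _ => ?_
      by_contra h
      exact hj (ww_support p f h).1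
  · rw [vv_eq_zero_of_not_le p f (fun h => hS ⟨j, (mem_SS p).mpr h⟩)]
    refine Finset.sum_eq_zero fun k _ => ?_
    by_contra h
    exact hS ⟨j, (mem_SS p).mpr (ww_support p f h).1⟩


/-- the finite set of monomials that can appear -/
noncomputable def TT : Finset (Fin n →₀ ℕ) :=
  Finset.univ.biUnion (fun j =>
    (f j).support.map ⟨fun s => s + pe p j, fun a b h => by simpa using h⟩)

lemma mem_TT_of_vv {j : Fin n} {μ : Fin n →₀ ℕ} (h : vv p f j μ ≠ 0) : μ ∈ TT p f := by
  unfold vv at h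
  split_ifs at h with hle
  · unfold TT
    refine Finset.mem_biUnion.mpr ⟨j, Finset.mem_univ _, Finset.mem_map.mpr
      ⟨μ - pe p j, MvPolynomial.mem_support_iff.mpr h, ?_⟩⟩
    exact tsub_add_cancel_of_le hle
  · exact absurd rfl h

lemma ww_zero_of_not_mem_TT {j k : Fin n} {μ : Fin n →₀ ℕ} (h : μ ∉ TT p f) :
    ww p f j k μ = 0 := by
  by_contra hw
  unfold ww at hw
  by_cases hS : (SS p μ).Nonempty
  · rw [dif_pos hS] at hw
    split_ifs at hw with h1 h2 h3
    · exact hw rfl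
    · exact h (mem_TT_of_vv p f hw)
    · exact h (mem_TT_of_vv p f (fun h0 => hw (by rw [h0, neg_zero])))
    · exact hw rfl
  · rw [dif_neg hS] at hw; exact hw rfl

noncomputable def gg (j k : Fin n) : MvPolynomial (Fin n) L :=
  ∑ μ ∈ TT p f, if pe p j + pe p k ≤ μ
    then MvPolynomial.monomial (μ - (pe p j + pe p k)) (ww p f j k μ) else 0

lemma coeff_gg (j k : Fin n) (τ : Fin n →₀ ℕ) :
    MvPolynomial.coeff τ (gg p f j k) = ww p f j k (τ + (pe p j + pe p k)) := by
  unfold gg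
  rw [MvPolynomial.coeff_sum]
  rw [Finset.sum_eq_single (τ + (pe p j + pe p k))]
  · rw [if_pos le_add_self, MvPolynomial.coeff_monomial, add_tsub_cancel_right, if_pos rfl]
  · intro μ _ hμ
    split_ifs with hle
    · rw [MvPolynomial.coeff_monomial, if_neg]
      intro h
      exact hμ (by rw [← h, tsub_add_cancel_of_le hle])
    · exact MvPolynomial.coeff_zero τ
  · intro h
    rw [ww_zero_of_not_mem_TT p f h, if_pos le_add_self, MvPolynomial.coeff_monomial,
      add_tsub_cancel_right, if_pos rfl]

lemma gg_diag (j : Fin n) : gg p f j j = 0 := by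
  apply MvPolynomial.ext
  intro τ
  rw [coeff_gg, ww_diag, MvPolynomial.coeff_zero]

lemma gg_antisym (j k : Fin n) : gg p f j k = - gg p f k j := by
  apply MvPolynomial.ext
  intro τ
  rw [MvPolynomial.coeff_neg, coeff_gg, coeff_gg, add_comm (pe p j), ww_antisym]

lemma gg_repr (hf : ∑ j, f j * X j ^ p = 0) (j : Fin n) :
    ∑ k, gg p f j k * X k ^ p = f j := by
  apply MvPolynomial.ext
  intro ν
  rw [MvPolynomial.coeff_sum]
  have key : ∀ k, MvPolynomial.coeff ν (gg p f j k * X k ^ p) = ww p f j k (ν + pe p j) := by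
    intro k
    rw [X_pow_eq_monomial, MvPolynomial.coeff_mul_monomial']
    show (if pe p k ≤ ν then _ * 1 else 0) = _
    by_cases hk : pe p k ≤ ν
    · rw [if_pos hk, mul_one, coeff_gg]
      congr 1
      unfold pe at hk ⊢
      rw [add_comm (Finsupp.single j p) (Finsupp.single k p), ← add_assoc,
        tsub_add_cancel_of_le hk, add_comm]
    · rw [if_neg hk]
      by_contra hw
      have h2 := (ww_support p f (Ne.symm hw)).2
      apply hk
      have hkle := h2.1
      have hjk : j ≠ k := h2.2
      rw [Finsupp.le_iff] at hkle ⊢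
      intro s hs
      have h4 := hkle s hs
      have hsk : s = k := by
        have h5 : s ∈ ({k} : Finset (Fin n)) := Finsupp.support_single_subset hs
        simpa using h5
      subst hsk
      simpa [pe, Finsupp.add_apply, Finsupp.single_apply, hjk] using h4
  rw [Finset.sum_congr rfl fun k _ => key k, ww_row_sum p f hf, vv, if_pos le_add_self,
    add_tsub_cancel_right]

lemma deg_le_of_mem_TT (E : ℕ) (hfd : ∀ j, (f j).totalDegree ≤ E) {μ : Fin n →₀ ℕ}
    (hμ : μ ∈ TT p f) : μ.degree ≤ E + p := by
  unfold TT at hμ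
  rw [Finset.mem_biUnion] at hμ
  obtain ⟨i, -, hi⟩ := hμ
  rw [Finset.mem_map] at hi
  obtain ⟨s, hs, rfl⟩ := hi
  show (s + pe p i).degree ≤ E + p
  rw [deg_add]
  unfold pe
  rw [deg_single]
  have h1 := MvPolynomial.le_totalDegree hs
  have h2 := hfd i
  have h3 : s.degree ≤ E := le_trans h1 h2
  omega

lemma gg_nonzero (E : ℕ) (hfd : ∀ j, (f j).totalDegree ≤ E) (j k : Fin n)
    (hg : gg p f j k ≠ 0) : p ≤ E := by
  obtain ⟨τ, hτ⟩ := MvPolynomial.ne_zero_iff.mp hg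
  rw [coeff_gg] at hτ
  have hμT : τ + (pe p j + pe p k) ∈ TT p f := by
    by_contra hc
    exact hτ (ww_zero_of_not_mem_TT p f hc)
  have h1 := deg_le_of_mem_TT p f E hfd hμT
  rw [deg_add, deg_add] at h1
  unfold pe at h1
  rw [deg_single, deg_single] at h1
  omega

lemma gg_degree (E : ℕ) (hfd : ∀ j, (f j).totalDegree ≤ E) (j k : Fin n) :
    (gg p f j k).totalDegree ≤ E - p := by
  unfold gg
  refine MvPolynomial.totalDegree_finsetSum_le fun μ hμ => ?_
  split_ifs with hle
  · refine (MvPolynomial.totalDegree_monomial_le _ _).trans ?_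
    show (μ - (pe p j + pe p k)).degree ≤ E - p
    have hdeg : (μ - (pe p j + pe p k)).degree + (p + p) = μ.degree := by
      have := tsub_add_cancel_of_le hle
      have h2 := congrArg Finsupp.degree this
      rw [deg_add, deg_add] at h2
      unfold pe at h2
      rw [deg_single, deg_single] at h2
      unfold pe
      omega
    have hμd : μ.degree ≤ E + p := deg_le_of_mem_TT p f E hfd hμ
    omega
  · simp

/-- The Koszul syzygy lemma for the regular sequence `X j ^ p`. -/
lemma syzygy (hf : ∑ j, f j * X j ^ p = 0) (E : ℕ) (hfd : ∀ j, (f j).totalDegree ≤ E) :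
    ∃ g : Fin n → Fin n → MvPolynomial (Fin n) L,
      (∀ j k, g j k = - g k j) ∧ (∀ j, g j j = 0) ∧
      (∀ j, ∑ k, g j k * X k ^ p = f j) ∧ (∀ j k, (g j k).totalDegree ≤ E - p) ∧
      (∀ j k, g j k ≠ 0 → p ≤ E) :=
  ⟨gg p f, gg_antisym p f, gg_diag p f, gg_repr p f hf, gg_degree p f E hfd,
    gg_nonzero p f E hfd⟩


/-- `1` does not lie in the ideal generated by the `X j ^ p - h j` when each `h j` is affine. -/
lemma noUnit (hp2 : 2 ≤ p) (h : Fin n → MvPolynomial (Fin n) L)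
    (hh : ∀ j, (h j).totalDegree ≤ 1) :
    ∀ D (c : Fin n → MvPolynomial (Fin n) L), (∀ j, (c j).totalDegree ≤ D) →
      (∑ j, c j * (X j ^ p - h j)) ≠ 1 := by
  intro D
  induction D with
  | zero =>
    intro c hc hE
    -- each `c j` is a constant; compare coefficients at `X j ^ p`
    have hcoeff : ∀ j, MvPolynomial.coeff (0 : Fin n →₀ ℕ) (c j) = 0 := by
      intro j
      have h1 := congrArg (MvPolynomial.coeff (Finsupp.single j p)) hE
      rw [MvPolynomial.coeff_sum] at h1
      have h2 : ∀ k, MvPolynomial.coeff (Finsupp.single j p) (c k * (X k ^ p - h k))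
          = if k = j then MvPolynomial.coeff (0 : Fin n →₀ ℕ) (c j) else 0 := by
        intro k
        rw [mul_sub, MvPolynomial.coeff_sub]
        have h3 : MvPolynomial.coeff (Finsupp.single j p) (c k * h k) = 0 := by
          apply MvPolynomial.coeff_eq_zero_of_totalDegree_lt
          have h4 : (c k * h k).totalDegree ≤ 1 :=
            le_trans (MvPolynomial.totalDegree_mul _ _)
              (by have := hc k; have := hh k; omega)
          have h5 : (Finsupp.single j p).degree = p := deg_single j p
          show (c k * h k).totalDegree < (Finsupp.single j p).degree
          omega
        rw [h3, sub_zero, X_pow_eq_monomial, MvPolynomial.coeff_mul_monomial']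
        rcases eq_or_ne k j with rfl | hkj
        · rw [if_pos le_rfl, if_pos rfl, tsub_self, mul_one]
        · rw [if_neg, if_neg hkj]
          rw [Finsupp.single_le_iff, Finsupp.single_apply, if_neg (Ne.symm hkj)]
          omega
      rw [Finset.sum_congr rfl fun k _ => h2 k, Finset.sum_ite_eq' Finset.univ j
        (fun _ => MvPolynomial.coeff (0 : Fin n →₀ ℕ) (c j)), if_pos (Finset.mem_univ j)] at h1
      rw [h1, MvPolynomial.coeff_one, if_neg]
      exact fun h0 => (by omega : p ≠ 0) (Finsupp.single_eq_zero.mp h0.symm)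
    have hc0 : ∀ j, c j = 0 := by
      intro j
      apply MvPolynomial.ext
      intro d
      rcases eq_or_ne d 0 with rfl | hd
      · rw [hcoeff j, MvPolynomial.coeff_zero]
      · rw [MvPolynomial.coeff_zero]
        apply MvPolynomial.coeff_eq_zero_of_totalDegree_lt
        have h6 : 0 < d.degree := Nat.pos_of_ne_zero fun h0 => hd ((Finsupp.degree_eq_zero_iff d).mp h0)
        have h7 := hc j
        show (c j).totalDegree < d.degree
        omega
    rw [Finset.sum_congr rfl fun j _ => by rw [hc0 j, zero_mul], Finset.sum_const_zero] at hE
    exact zero_ne_one hE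
  | succ D ih =>
    intro c hc hE
    set N := D + 1 + p with hN
    set f : Fin n → MvPolynomial (Fin n) L :=
      fun j => MvPolynomial.homogeneousComponent (D + 1) (c j) with hf
    -- the leading forms are a syzygy of the X j ^ p
    have claim1 : ∑ j, f j * X j ^ p = 0 := by
      have h1 : ∀ j, MvPolynomial.homogeneousComponent N (c j * X j ^ p) = f j * X j ^ p := by
        intro j
        apply MvPolynomial.ext
        intro μ
        rw [MvPolynomial.coeff_homogeneousComponent]
        simp only [hf]
        rw [X_pow_eq_monomial, MvPolynomial.coeff_mul_monomial', MvPolynomial.coeff_mul_monomial']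
        by_cases hle : Finsupp.single j p ≤ μ
        · have hdd : (μ - Finsupp.single j p).degree + p = μ.degree := by
            have h2 := congrArg Finsupp.degree (tsub_add_cancel_of_le hle)
            rw [deg_add, deg_single] at h2
            omega
          rw [if_pos hle, if_pos hle, MvPolynomial.coeff_homogeneousComponent]
          split_ifs with h3 h4 h5 <;> first | rfl | (exfalso; omega) | simp
        · rw [if_neg hle, if_neg hle, ite_self]
      have h0 : MvPolynomial.homogeneousComponent N (1 : MvPolynomial (Fin n) L) = 0 := by
        apply MvPolynomial.homogeneousComponent_eq_zero
        rw [MvPolynomial.totalDegree_one]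
        omega
      have h2 : ∀ j, MvPolynomial.homogeneousComponent N (c j * h j) = 0 := by
        intro j
        apply MvPolynomial.homogeneousComponent_eq_zero
        have := le_trans (MvPolynomial.totalDegree_mul (c j) (h j))
          (add_le_add (hc j) (hh j))
        omega
      have h3 := congrArg (MvPolynomial.homogeneousComponent N) hE
      rw [map_sum, h0] at h3
      rw [← h3]
      refine (Finset.sum_congr rfl fun j _ => ?_).symm
      rw [mul_sub, map_sub, h1, h2, sub_zero]
    have hfdeg : ∀ j, (f j).totalDegree ≤ D + 1 := fun j =>
      (MvPolynomial.homogeneousComponent_isHomogeneous (D+1) (c j)).totalDegree_le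
    obtain ⟨g, hganti, hgdiag, hgrepr, hgdeg, hgnz⟩ := syzygy p f claim1 (D + 1) hfdeg
    -- the corrected coefficients
    have claim3 : ∑ j, (c j - f j + ∑ k, g j k * h k) * (X j ^ p - h j) = 1 := by
      have step1 : ∑ j, (c j - f j + ∑ k, g j k * h k) * (X j ^ p - h j)
          = (∑ j, c j * (X j ^ p - h j)) - (∑ j, f j * X j ^ p)
            + ∑ j, (f j * h j + (∑ k, g j k * h k) * (X j ^ p - h j)) := by
        rw [← Finset.sum_sub_distrib, ← Finset.sum_add_distrib]
        exact Finset.sum_congr rfl fun j _ => by ring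
      rw [step1, hE, claim1, sub_zero]
      have step2 : ∑ j, (f j * h j + (∑ k, g j k * h k) * (X j ^ p - h j))
          = ∑ j, ∑ k, (g j k * X k ^ p * h j + g j k * h k * X j ^ p - g j k * h k * h j) := by
        refine Finset.sum_congr rfl fun j _ => ?_
        rw [← hgrepr j, Finset.sum_mul, Finset.sum_mul, ← Finset.sum_add_distrib]
        exact Finset.sum_congr rfl fun k _ => by ring
      have step3 : ∑ j, ∑ k,
          (g j k * X k ^ p * h j + g j k * h k * X j ^ p - g j k * h k * h j)
          = (0 : MvPolynomial (Fin n) L) := by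
        rw [← Finset.sum_product']
        refine Finset.sum_ninvolution Prod.swap ?_ ?_ (fun a => Finset.mem_univ _)
          (fun a => Prod.swap_swap a)
        · rintro ⟨j, k⟩
          simp only [Prod.swap_prod_mk]
          rw [hganti k j]
          ring
        · rintro ⟨j, k⟩ hne heq
          apply hne
          simp only [Prod.swap_prod_mk, Prod.mk.injEq] at heq
          obtain ⟨rfl, -⟩ := heq
          rw [hgdiag]
          ring
      rw [step2, step3, add_zero]
    have hdeg' : ∀ j, (c j - f j + ∑ k, g j k * h k).totalDegree ≤ D := by
      intro j
      refine le_trans (MvPolynomial.totalDegree_add _ _) (max_le ?_ ?_)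
      · -- c j minus its leading form
        rw [MvPolynomial.totalDegree]
        refine Finset.sup_le fun s hs => ?_
        rw [MvPolynomial.mem_support_iff] at hs
        show s.degree ≤ D
        have h1 : MvPolynomial.coeff s (c j - f j)
            = MvPolynomial.coeff s (c j) - (if s.degree = D + 1 then MvPolynomial.coeff s (c j) else 0) := by
          rw [MvPolynomial.coeff_sub]
          simp only [hf]
          rw [MvPolynomial.coeff_homogeneousComponent]
        by_cases h2 : s.degree = D + 1
        · rw [h1, if_pos h2, sub_self] at hs
          exact absurd rfl hs
        · have h3 : MvPolynomial.coeff s (c j) ≠ 0 := by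
            rw [h1, if_neg h2, sub_zero] at hs
            exact hs
          have h4 := MvPolynomial.le_totalDegree (MvPolynomial.mem_support_iff.mpr h3)
          have h5 := hc j
          have h6 : s.degree ≤ D + 1 := le_trans h4 h5
          omega
      · refine MvPolynomial.totalDegree_finsetSum_le fun k _ => ?_
        rcases eq_or_ne (g j k) 0 with hz | hz
        · rw [hz, zero_mul, MvPolynomial.totalDegree_zero]
          exact Nat.zero_le _
        · have h1 := hgdeg j k
          have h2 := hgnz j k hz
          refine le_trans (MvPolynomial.totalDegree_mul _ _) ?_
          have h3 := hh k
          omega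
    exact ih _ hdeg' claim3


/-- Solvability of the affine Frobenius-linear system `x j ^ p = ∑ k, W j k * x k + d j`. -/
lemma solve [IsAlgClosed L] (hp2 : 2 ≤ p) (W : Matrix (Fin n) (Fin n) L) (d : Fin n → L) :
    ∃ x : Fin n → L, ∀ j, x j ^ p = (∑ k, W j k * x k) + d j := by
  classical
  set h : Fin n → MvPolynomial (Fin n) L :=
    fun j => MvPolynomial.C (d j) + ∑ k, MvPolynomial.C (W j k) * X k with hhdef
  have hh : ∀ j, (h j).totalDegree ≤ 1 := by
    intro j
    refine le_trans (MvPolynomial.totalDegree_add _ _) (max_le ?_ ?_)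
    · rw [MvPolynomial.totalDegree_C]
      omega
    · refine MvPolynomial.totalDegree_finsetSum_le fun k _ => ?_
      refine le_trans (MvPolynomial.totalDegree_mul _ _) ?_
      rw [MvPolynomial.totalDegree_C, MvPolynomial.totalDegree_X]
  set G : Fin n → MvPolynomial (Fin n) L := fun j => X j ^ p - h j with hGdef
  set I : Ideal (MvPolynomial (Fin n) L) := Ideal.span (Set.range G) with hIdef
  have h1 : (1 : MvPolynomial (Fin n) L) ∉ I := by
    intro hmem
    obtain ⟨c, hc⟩ := Ideal.mem_span_range_iff_exists_fun.mp hmem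
    exact noUnit p hp2 h hh (Finset.univ.sup fun j => (c j).totalDegree) c
      (fun j => Finset.le_sup (f := fun j => (c j).totalDegree) (Finset.mem_univ j)) hc
  have hZ : (MvPolynomial.zeroLocus L I).Nonempty := by
    by_contra hempty
    rw [Set.not_nonempty_iff_eq_empty] at hempty
    have h2 := MvPolynomial.vanishingIdeal_zeroLocus_eq_radical (K := L) I
    rw [hempty, MvPolynomial.vanishingIdeal_empty] at h2
    have h3 : I = ⊤ := Ideal.radical_eq_top.mp h2.symm
    exact h1 (h3 ▸ Submodule.mem_top)
  obtain ⟨x, hx⟩ := hZ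
  refine ⟨x, fun j => ?_⟩
  have hgj := hx (G j) (Ideal.subset_span (Set.mem_range_self j))
  have h4 : (MvPolynomial.eval x) (G j)
      = x j ^ p - (d j + ∑ k, W j k * x k) := by
    simp [hGdef, hhdef]
  rw [show (MvPolynomial.eval x) (G j) = 0 from hgj] at h4
  have h5 := sub_eq_zero.mp h4.symm
  rw [h5, add_comm]

end ASaux

/-- **Solvability of the Artin–Schreier-type system attached to an invertible matrix.**
Let `L` be an algebraically closed field of characteristic `p > 0`, `n ≥ 1` and
`U = (a_{i,j})` an invertible `n × n` matrix over `L`.  Then for every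
`b = (b₁, …, b_n) ∈ Lⁿ` the system `∑_j a_{i,j} x_j ^ p − x_i = b_i` has a
solution in `Lⁿ`. -/
theorem stmt_2 {L : Type*} [Field L] [IsAlgClosed L] (p : ℕ) [Fact p.Prime] [CharP L p]
    (n : ℕ) (hn : 1 ≤ n) (U : Matrix (Fin n) (Fin n) L) (hU : IsUnit U.det)
    (b : Fin n → L) :
    ∃ x : Fin n → L, ∀ i : Fin n, (∑ j : Fin n, U i j * x j ^ p) - x i = b i := by
  have hp2 : 2 ≤ p := (Fact.out : p.Prime).two_le
  obtain ⟨x, hx⟩ := ASaux.solve p hp2 U⁻¹ (U⁻¹.mulVec b)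
  refine ⟨x, fun i => ?_⟩
  have hxv : (fun j => x j ^ p) = U⁻¹.mulVec x + U⁻¹.mulVec b := by
    funext j
    rw [hx j]
    simp [Matrix.mulVec, dotProduct]
  have h2 : U.mulVec (fun j => x j ^ p) = x + b := by
    rw [hxv, ← Matrix.mulVec_add, Matrix.mulVec_mulVec, Matrix.mul_nonsing_inv U hU,
      Matrix.one_mulVec]
  have h3 := congrFun h2 i
  simp only [Matrix.mulVec, dotProduct, Pi.add_apply] at h3
  rw [show (∑ j : Fin n, U i j * x j ^ p) = x i + b i from h3]
  ring
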